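/- Let n ≥ 2 and let W_1,…,W_n be bounded operators on a complex Hilbert space L satisfying W_i^* W_j = δ_{ij} I and W_1 W_1^* + ⋯ + W_n W_n^* = I. Suppose the tuple acts irreducibly: the only closed subspaces N of L with W_i N ⊆ N and W_i^* N ⊆ N for all i are N = {0} and N = L. Then the maximal commuting piece space L^c(W) has dimension at most 1; moreover, if L^c(W) ≠ {0} then there exist a unit vector x spanning L^c(W) and scalars w_1,…,w_n ∈ ℂ with Σ_i |w_i|² = 1 such that W_i^* x = \overline{w_i} x for all i. -/

import Mathlib

set_option maxHeartbeats 1000000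

open ContinuousLinearMap

noncomputable def wordProd {n : ℕ} {L : Type*} [NormedAddCommGroup L] [InnerProductSpace ℂ L]
    (R : Fin n → L →L[ℂ] L) (α : List (Fin n)) : L →L[ℂ] L :=
  (α.map R).prod

/-- The maximal commuting piece space `L^c(R)` as a submodule:
`{x : (R_i^* R_j^* − R_j^* R_i^*)(R^α)^* x = 0 for all i, j, α}`. -/
noncomputable def commPieceSub {n : ℕ} {L : Type*} [NormedAddCommGroup L]
    [InnerProductSpace ℂ L] [CompleteSpace L] (R : Fin n → L →L[ℂ] L) : Submodule ℂ L :=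
  ⨅ (i : Fin n) (j : Fin n) (α : List (Fin n)),
    LinearMap.ker (((adjoint (R i) ∘L adjoint (R j) - adjoint (R j) ∘L adjoint (R i)) ∘L
      adjoint (wordProd R α) : L →L[ℂ] L) : L →ₗ[ℂ] L)

section Aux

set_option linter.unusedSectionVars false

variable {n : ℕ} {L : Type*} [NormedAddCommGroup L] [InnerProductSpace ℂ L] [CompleteSpace L]

local notation "⟪" x ", " y "⟫" => @inner ℂ _ _ x y

lemma mem_commPieceSub {W : Fin n → L →L[ℂ] L} {x : L} :
    x ∈ commPieceSub W ↔ ∀ (i j : Fin n) (α : List (Fin n)),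
      adjoint (W i) (adjoint (W j) (adjoint (wordProd W α) x)) =
      adjoint (W j) (adjoint (W i) (adjoint (wordProd W α) x)) := by
  simp only [commPieceSub, ContinuousLinearMap.coe_coe, Submodule.mem_iInf, LinearMap.mem_ker, ContinuousLinearMap.coe_comp',
    Function.comp_apply, ContinuousLinearMap.sub_apply, sub_eq_zero, ContinuousLinearMap.coe_sub',
    Pi.sub_apply]

lemma isClosed_commPieceSub (W : Fin n → L →L[ℂ] L) :
    IsClosed ((commPieceSub W : Submodule ℂ L) : Set L) := by
  have : ((commPieceSub W : Submodule ℂ L) : Set L) =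
      ⋂ (i : Fin n), ⋂ (j : Fin n), ⋂ (α : List (Fin n)),
        ((LinearMap.ker (((adjoint (W i) ∘L adjoint (W j) - adjoint (W j) ∘L adjoint (W i)) ∘L
          adjoint (wordProd W α) : L →L[ℂ] L) : L →ₗ[ℂ] L) : Submodule ℂ L) : Set L) := by
    simp [commPieceSub, Submodule.coe_iInf]
  rw [this]
  exact isClosed_iInter fun i => isClosed_iInter fun j => isClosed_iInter fun α =>
    ContinuousLinearMap.isClosed_ker _

lemma wordProd_cons {W : Fin n → L →L[ℂ] L} (k : Fin n) (α : List (Fin n)) :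
    wordProd W (k :: α) = W k ∘L wordProd W α := by
  simp [wordProd, List.map_cons, List.prod_cons]
  rfl

lemma adjoint_mem_commPieceSub {W : Fin n → L →L[ℂ] L} {x : L}
    (hx : x ∈ commPieceSub W) (k : Fin n) : adjoint (W k) x ∈ commPieceSub W := by
  rw [mem_commPieceSub] at hx ⊢
  intro i j α
  have h : adjoint (wordProd W α) (adjoint (W k) x) = adjoint (wordProd W (k :: α)) x := by
    rw [wordProd_cons, adjoint_comp]; rfl
  rw [h]; exact hx i j (k :: α)

lemma adjoint_comm_commPieceSub {W : Fin n → L →L[ℂ] L} {x : L}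
    (hx : x ∈ commPieceSub W) (i j : Fin n) :
    adjoint (W i) (adjoint (W j) x) = adjoint (W j) (adjoint (W i) x) := by
  have := (mem_commPieceSub.mp hx) i j []
  have h1 : wordProd W ([] : List (Fin n)) = 1 := by simp [wordProd]
  rw [h1] at this
  have h2 : adjoint (1 : L →L[ℂ] L) = 1 := by
    have := adjoint_id (𝕜 := ℂ) (E := L)
    simpa [ContinuousLinearMap.one_def] using this
  rw [h2] at this
  simpa using this


lemma nontrivial_B [Nontrivial L] : Nontrivial (L →L[ℂ] L) := by
  obtain ⟨z, hz⟩ := exists_ne (0 : L)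
  refine ⟨1, 0, fun h => hz ?_⟩
  have := congrArg (fun T : L →L[ℂ] L => T z) h
  simpa using this

lemma cfc_commute_of_commute [Nontrivial L] (S V : L →L[ℂ] L) (hS : IsSelfAdjoint S)
    (hV : Commute S V) (f : ℝ → ℝ) (hf : Continuous f) :
    Commute (cfc f S) V := by
  rw [cfc_apply f S hS hf.continuousOn]
  have key : ∀ q : C(spectrum ℝ S, ℝ), Commute (cfcHom hS q) V := by
    intro q
    induction q using ContinuousMap.induction_on_of_compact with
    | const r =>
      have h1 : (ContinuousMap.const (spectrum ℝ S) r) = r • (1 : C(spectrum ℝ S, ℝ)) := by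
        ext x; simp
      rw [h1, map_smul, map_one]
      exact (Commute.one_left V).smul_left r
    | id =>
      rw [cfcHom_id hS]; exact hV
    | star_id =>
      rw [star_trivial, cfcHom_id hS]; exact hV
    | add f g hfc hgc => rw [map_add]; exact hfc.add_left hgc
    | mul f g hfc hgc => rw [map_mul]; exact hfc.mul_left hgc
    | frequently f hf =>
      have hcl : IsClosed {q : C(spectrum ℝ S, ℝ) | Commute (cfcHom hS q) V} := by
        have : {q : C(spectrum ℝ S, ℝ) | Commute (cfcHom hS q) V} =
            {q | (cfcHom hS q) * V = V * (cfcHom hS q)} := rfl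
        rw [this]
        exact isClosed_eq (((cfcHom_continuous hS)).mul continuous_const)
          (continuous_const.mul ((cfcHom_continuous hS)))
      have hm : f ∈ closure {q : C(spectrum ℝ S, ℝ) | Commute (cfcHom hS q) V} :=
        mem_closure_iff_frequently.mpr hf
      rwa [hcl.closure_eq] at hm
  exact key _

lemma selfadj_scalar [Nontrivial L] {W : Fin n → L →L[ℂ] L}
    (hirr : ∀ N : Submodule ℂ L, IsClosed (N : Set L) →
      (∀ i : Fin n, ∀ x ∈ N, W i x ∈ N ∧ adjoint (W i) x ∈ N) → N = ⊥ ∨ N = ⊤)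
    (S : L →L[ℂ] L) (hS : IsSelfAdjoint S)
    (h1 : ∀ i, Commute S (W i)) (h2 : ∀ i, Commute S (adjoint (W i))) :
    ∃ r : ℝ, S = (r : ℂ) • (1 : L →L[ℂ] L) := by
  haveI : Nontrivial (L →L[ℂ] L) := nontrivial_B
  by_cases hsp : ∃ r₁ ∈ spectrum ℝ S, ∃ r₂ ∈ spectrum ℝ S, r₁ ≠ r₂
  · exfalso
    obtain ⟨r₁, hr₁, r₂, hr₂, hne⟩ := hsp
    set δ : ℝ := |r₁ - r₂| with hδdef
    have hδpos : 0 < δ := abs_pos.mpr (sub_ne_zero.mpr hne)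
    set f : ℝ → ℝ := fun x => max (1 - (2/δ) * |x - r₁|) 0 with hfdef
    set g : ℝ → ℝ := fun x => max (1 - (2/δ) * |x - r₂|) 0 with hgdef
    have hfc : Continuous f := by
      apply Continuous.max _ continuous_const
      exact continuous_const.sub (continuous_const.mul ((continuous_id.sub continuous_const).abs))
    have hgc : Continuous g := by
      apply Continuous.max _ continuous_const
      exact continuous_const.sub (continuous_const.mul ((continuous_id.sub continuous_const).abs))
    have hfg : ∀ x, g x * f x = 0 := by
      intro x
      rcases le_or_gt (1 - (2/δ) * |x - r₁|) 0 with h | h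
      · have hf0 : f x = 0 := max_eq_right h
        rw [hf0, mul_zero]
      · have h' : (2/δ) * |x - r₁| < 1 := by linarith
        have hx1' : 2 * |x - r₁| < δ := by
          calc 2 * |x - r₁| = ((2/δ) * |x - r₁|) * δ := by field_simp
          _ < 1 * δ := mul_lt_mul_of_pos_right h' hδpos
          _ = δ := one_mul δ
        have habs : δ ≤ |x - r₁| + |x - r₂| := by
          calc δ = |r₁ - r₂| := rfl
          _ ≤ |r₁ - x| + |x - r₂| := abs_sub_le r₁ x r₂
          _ = |x - r₁| + |x - r₂| := by rw [abs_sub_comm]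
        have hone : 1 ≤ (2/δ) * |x - r₂| := by
          rw [div_mul_eq_mul_div, le_div_iff₀ hδpos, one_mul]
          linarith
        have hle : 1 - (2/δ) * |x - r₂| ≤ 0 := by linarith
        have hg0 : g x = 0 := max_eq_right hle
        rw [hg0, zero_mul]
    have hGF : cfc g S * cfc f S = 0 := by
      rw [← cfc_mul g f S hgc.continuousOn hfc.continuousOn]
      have : cfc (fun x => g x * f x) S = cfc (0 : ℝ → ℝ) S := cfc_congr (fun x _ => hfg x)
      rw [this, cfc_zero]
    have hfr₁ : f r₁ = 1 := by
      show max (1 - (2/δ) * |r₁ - r₁|) 0 = 1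
      rw [sub_self, abs_zero, mul_zero, sub_zero]
      exact max_eq_left zero_le_one
    have hgr₂ : g r₂ = 1 := by
      show max (1 - (2/δ) * |r₂ - r₂|) 0 = 1
      rw [sub_self, abs_zero, mul_zero, sub_zero]
      exact max_eq_left zero_le_one
    have hF1 : (1:ℝ) ∈ spectrum ℝ (cfc f S) := by
      rw [cfc_map_spectrum f S hS hfc.continuousOn]
      exact ⟨r₁, hr₁, hfr₁⟩
    have hG1 : (1:ℝ) ∈ spectrum ℝ (cfc g S) := by
      rw [cfc_map_spectrum g S hS hgc.continuousOn]
      exact ⟨r₂, hr₂, hgr₂⟩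
    have hFne : cfc f S ≠ 0 := by
      intro h; rw [h, spectrum.zero_eq] at hF1
      simpa using hF1
    have hGne : cfc g S ≠ 0 := by
      intro h; rw [h, spectrum.zero_eq] at hG1
      simpa using hG1
    -- the kernel of cfc g S is a reducing subspace
    have hGcomm : ∀ i, Commute (cfc g S) (W i) ∧ Commute (cfc g S) (adjoint (W i)) :=
      fun i => ⟨cfc_commute_of_commute S (W i) hS (h1 i) g hgc,
        cfc_commute_of_commute S (adjoint (W i)) hS (h2 i) g hgc⟩
    have hker := hirr (LinearMap.ker ((cfc g S : L →L[ℂ] L) : L →ₗ[ℂ] L)) (by exact ContinuousLinearMap.isClosed_ker (cfc g S)) ?_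
    · rcases hker with hbot | htop
      · -- cfc g S injective; but (cfc g S) ((cfc f S) z) = 0 for all z
        apply hFne
        ext z
        have hz : (cfc g S) ((cfc f S) z) = 0 := by
          have := congrArg (fun T : L →L[ℂ] L => T z) hGF
          simpa [ContinuousLinearMap.mul_apply] using this
        have : (cfc f S) z ∈ (LinearMap.ker ((cfc g S : L →L[ℂ] L) : L →ₗ[ℂ] L) : Submodule ℂ L) := hz
        rw [hbot] at this
        simpa using this
      · apply hGne
        ext z
        have : z ∈ (LinearMap.ker ((cfc g S : L →L[ℂ] L) : L →ₗ[ℂ] L) : Submodule ℂ L) := by rw [htop]; trivial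
        simpa using this
    · intro i x hx
      have hx0 : (cfc g S) x = 0 := hx
      constructor
      · show (cfc g S) (W i x) = 0
        have := congrArg (fun T : L →L[ℂ] L => T x) (hGcomm i).1.eq
        simp only [ContinuousLinearMap.mul_apply] at this
        rw [this, hx0, map_zero]
      · show (cfc g S) (adjoint (W i) x) = 0
        have := congrArg (fun T : L →L[ℂ] L => T x) (hGcomm i).2.eq
        simp only [ContinuousLinearMap.mul_apply] at this
        rw [this, hx0, map_zero]
  · push_neg at hsp
    obtain ⟨r, hr⟩ := hS.spectrum_nonempty
    refine ⟨r, ?_⟩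
    have h1' : S = cfc (id : ℝ → ℝ) S := (cfc_id ℝ S hS).symm
    have h2' : cfc (id : ℝ → ℝ) S = cfc (fun _ => r) S :=
      cfc_congr (fun x hx => hsp x hx r hr)
    have h3' : cfc (fun _ : ℝ => r) S = algebraMap ℝ (L →L[ℂ] L) r := cfc_const r S hS
    rw [h1', h2', h3', Algebra.algebraMap_eq_smul_one, ← Complex.coe_smul]

open ComplexStarModule in
lemma scalar_of_commutes [Nontrivial L] {W : Fin n → L →L[ℂ] L}
    (hirr : ∀ N : Submodule ℂ L, IsClosed (N : Set L) →
      (∀ i : Fin n, ∀ x ∈ N, W i x ∈ N ∧ adjoint (W i) x ∈ N) → N = ⊥ ∨ N = ⊤)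
    (A : L →L[ℂ] L)
    (h1 : ∀ i, Commute A (W i)) (h2 : ∀ i, Commute A (adjoint (W i))) :
    ∃ c : ℂ, A = c • (1 : L →L[ℂ] L) := by
  have hstar1 : ∀ i, Commute (star A) (W i) := by
    intro i
    have h := ((h2 i).star_star)
    have hrw : star (adjoint (W i)) = W i := by
      rw [ContinuousLinearMap.star_eq_adjoint, adjoint_adjoint]
    rwa [hrw] at h
  have hstar2 : ∀ i, Commute (star A) (adjoint (W i)) := by
    intro i
    have h := ((h1 i).star_star)
    have hrw : star (W i) = adjoint (W i) := ContinuousLinearMap.star_eq_adjoint (W i)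
    rwa [hrw] at h
  have hre1 : ∀ i, Commute ((ℜ A : L →L[ℂ] L)) (W i) := by
    intro i
    rw [realPart_apply_coe]
    exact (((h1 i).add_left (hstar1 i)).smul_left _)
  have hre2 : ∀ i, Commute ((ℜ A : L →L[ℂ] L)) (adjoint (W i)) := by
    intro i
    rw [realPart_apply_coe]
    exact (((h2 i).add_left (hstar2 i)).smul_left _)
  have him1 : ∀ i, Commute ((ℑ A : L →L[ℂ] L)) (W i) := by
    intro i
    rw [imaginaryPart_apply_coe]
    exact ((((h1 i).sub_left (hstar1 i)).smul_left _).smul_left _)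
  have him2 : ∀ i, Commute ((ℑ A : L →L[ℂ] L)) (adjoint (W i)) := by
    intro i
    rw [imaginaryPart_apply_coe]
    exact ((((h2 i).sub_left (hstar2 i)).smul_left _).smul_left _)
  obtain ⟨r, hrr⟩ := selfadj_scalar hirr (ℜ A : L →L[ℂ] L) (ℜ A).2 hre1 hre2
  obtain ⟨s, hss⟩ := selfadj_scalar hirr (ℑ A : L →L[ℂ] L) (ℑ A).2 him1 him2
  refine ⟨(r : ℂ) + Complex.I * s, ?_⟩
  have := realPart_add_I_smul_imaginaryPart A
  rw [← this, hrr, hss, smul_smul, ← add_smul]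


lemma cuntz_pt {W : Fin n → L →L[ℂ] L}
    (hcuntz : ∑ i : Fin n, W i ∘L adjoint (W i) = 1) (z : L) :
    ∑ i : Fin n, W i (adjoint (W i) z) = z := by
  have := congrArg (fun T : L →L[ℂ] L => T z) hcuntz
  simpa [ContinuousLinearMap.sum_apply] using this

lemma sum_adjoint_sq {W : Fin n → L →L[ℂ] L}
    (hcuntz : ∑ i : Fin n, W i ∘L adjoint (W i) = 1) (u : L) :
    ∑ i : Fin n, ‖adjoint (W i) u‖^2 = ‖u‖^2 := by
  have h1 : (⟪u, u⟫ : ℂ) = ∑ i : Fin n, ⟪adjoint (W i) u, adjoint (W i) u⟫ := by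
    calc (⟪u, u⟫ : ℂ) = ⟪∑ i : Fin n, W i (adjoint (W i) u), u⟫ := by rw [cuntz_pt hcuntz u]
    _ = ∑ i : Fin n, ⟪W i (adjoint (W i) u), u⟫ := sum_inner Finset.univ _ u
    _ = ∑ i : Fin n, ⟪adjoint (W i) u, adjoint (W i) u⟫ :=
        Finset.sum_congr rfl fun i _ => (adjoint_inner_right (W i) _ u).symm
  have h2 : ((‖u‖^2 : ℝ) : ℂ) = ((∑ i : Fin n, ‖adjoint (W i) u‖^2 : ℝ) : ℂ) := by
    calc ((‖u‖^2 : ℝ) : ℂ) = ⟪u, u⟫ := by rw [inner_self_eq_norm_sq_to_K]; norm_cast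
    _ = ∑ i : Fin n, ⟪adjoint (W i) u, adjoint (W i) u⟫ := h1
    _ = ∑ i : Fin n, ((‖adjoint (W i) u‖^2 : ℝ) : ℂ) := by
        refine Finset.sum_congr rfl fun i _ => ?_
        rw [inner_self_eq_norm_sq_to_K]; norm_cast
    _ = ((∑ i : Fin n, ‖adjoint (W i) u‖^2 : ℝ) : ℂ) := by push_cast; ring
  exact_mod_cast h2.symm


lemma core_scalar [Nontrivial L] {W : Fin n → L →L[ℂ] L}
    (hisom : ∀ i j : Fin n, adjoint (W i) ∘L W j = if i = j then 1 else 0)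
    (hcuntz : ∑ i : Fin n, W i ∘L adjoint (W i) = 1)
    (hirr : ∀ N : Submodule ℂ L, IsClosed (N : Set L) →
      (∀ i : Fin n, ∀ x ∈ N, W i x ∈ N ∧ adjoint (W i) x ∈ N) → N = ⊥ ∨ N = ⊤)
    (b : L →L[ℂ] L)
    (hb : ∀ x ∈ commPieceSub W, ∀ y ∈ commPieceSub W,
      ∑ i : Fin n, ⟪b (adjoint (W i) x), adjoint (W i) y⟫ = ⟪b x, y⟫) :
    ∃ c : ℂ, ∀ x ∈ commPieceSub W, ∀ y ∈ commPieceSub W, ⟪b x, y⟫ = c * ⟪x, y⟫ := by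
  classical
  set Hc := commPieceSub W with hHc
  haveI : CompleteSpace Hc := (isClosed_commPieceSub W).completeSpace_coe
  set P : L →L[ℂ] L := Hc.subtypeL ∘L Submodule.orthogonalProjection Hc with hPdef
  have hPmem : ∀ x, x ∈ Hc → P x = x := by
    intro x hx
    have h0 : Submodule.orthogonalProjection Hc ((⟨x, hx⟩ : Hc) : L) = ⟨x, hx⟩ :=
      Submodule.orthogonalProjection_mem_subspace_eq_self _
    simp only [hPdef, ContinuousLinearMap.comp_apply]
    rw [show ((⟨x, hx⟩ : Hc) : L) = x from rfl] at h0
    rw [h0]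
    rfl
  have hPsym : ∀ u v : L, ⟪P u, v⟫ = ⟪u, P v⟫ := by
    intro u v
    simp only [hPdef, ContinuousLinearMap.comp_apply]
    exact Hc.inner_starProjection_left_eq_right u v
  -- pointwise versions of the hypotheses
  have hcuntzpt : ∀ z : L, ∑ i : Fin n, W i (adjoint (W i) z) = z := by
    intro z
    have := congrArg (fun T : L →L[ℂ] L => T z) hcuntz
    simpa [ContinuousLinearMap.sum_apply] using this
  have hisompt : ∀ (i j : Fin n) (z : L), adjoint (W i) (W j z) = if i = j then z else 0 := by
    intro i j z
    have := congrArg (fun T : L →L[ℂ] L => T z) (hisom i j)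
    simp only [ContinuousLinearMap.comp_apply] at this
    rw [this]
    split_ifs <;> simp
  -- the ergodic iteration
  set Xi : (L →L[ℂ] L) → (L →L[ℂ] L) := fun X => ∑ i : Fin n, W i ∘L X ∘L adjoint (W i)
    with hXidef
  set a : L →L[ℂ] L := P ∘L b ∘L P with hadef
  set g : ℕ → L →L[ℂ] L := fun m => Xi^[m] a with hgdef
  have hXipair : ∀ (X : L →L[ℂ] L) (u v : L),
      ⟪Xi X u, v⟫ = ∑ i : Fin n, ⟪X (adjoint (W i) u), adjoint (W i) v⟫ := by
    intro X u v
    simp only [hXidef, ContinuousLinearMap.sum_apply, ContinuousLinearMap.comp_apply]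
    rw [sum_inner]
    exact Finset.sum_congr rfl fun i _ => (adjoint_inner_right (W i) _ _).symm
  -- norm facts
  have hWsq : ∀ u : L, ∑ i : Fin n, ‖adjoint (W i) u‖^2 = ‖u‖^2 := by
    intro u
    have h1 : (⟪u, u⟫ : ℂ) = ∑ i : Fin n, ⟪adjoint (W i) u, adjoint (W i) u⟫ := by
      calc (⟪u, u⟫ : ℂ) = ⟪∑ i : Fin n, W i (adjoint (W i) u), u⟫ := by rw [hcuntzpt u]
      _ = ∑ i : Fin n, ⟪W i (adjoint (W i) u), u⟫ := sum_inner Finset.univ _ u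
      _ = ∑ i : Fin n, ⟪adjoint (W i) u, adjoint (W i) u⟫ :=
          Finset.sum_congr rfl fun i _ => (adjoint_inner_right (W i) _ u).symm
    have h2 : ((‖u‖^2 : ℝ) : ℂ) = ((∑ i : Fin n, ‖adjoint (W i) u‖^2 : ℝ) : ℂ) := by
      calc ((‖u‖^2 : ℝ) : ℂ) = ⟪u, u⟫ := by rw [inner_self_eq_norm_sq_to_K]; norm_cast
      _ = ∑ i : Fin n, ⟪adjoint (W i) u, adjoint (W i) u⟫ := h1
      _ = ∑ i : Fin n, ((‖adjoint (W i) u‖^2 : ℝ) : ℂ) := by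
          refine Finset.sum_congr rfl fun i _ => ?_
          rw [inner_self_eq_norm_sq_to_K]; norm_cast
      _ = ((∑ i : Fin n, ‖adjoint (W i) u‖^2 : ℝ) : ℂ) := by push_cast; ring
    exact_mod_cast h2.symm
  have hsum_orth : ∀ v : Fin n → L, ‖∑ i : Fin n, W i (v i)‖^2 = ∑ i : Fin n, ‖v i‖^2 := by
    intro v
    have h1 : (⟪∑ i : Fin n, W i (v i), ∑ j : Fin n, W j (v j)⟫ : ℂ)
        = ∑ i : Fin n, ⟪v i, v i⟫ := by
      rw [sum_inner]
      have hrow : ∀ i : Fin n, (⟪W i (v i), ∑ j : Fin n, W j (v j)⟫ : ℂ) = ⟪v i, v i⟫ := by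
        intro i
        rw [inner_sum]
        have hterm : ∀ j : Fin n, (⟪W i (v i), W j (v j)⟫ : ℂ)
            = if j = i then ⟪v i, v j⟫ else 0 := by
          intro j
          rw [← adjoint_inner_left (W j)]
          rw [hisompt j i (v i)]
          split_ifs with h
          · rfl
          · rw [inner_zero_left]
        rw [Finset.sum_congr rfl (fun j _ => hterm j)]
        simp
      exact Finset.sum_congr rfl fun i _ => hrow i
    have h2 : ((‖∑ i : Fin n, W i (v i)‖^2 : ℝ) : ℂ)
        = ((∑ i : Fin n, ‖v i‖^2 : ℝ) : ℂ) := by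
      calc ((‖∑ i : Fin n, W i (v i)‖^2 : ℝ) : ℂ)
          = ⟪∑ i : Fin n, W i (v i), ∑ j : Fin n, W j (v j)⟫ := by
            rw [inner_self_eq_norm_sq_to_K]; norm_cast
      _ = ∑ i : Fin n, ⟪v i, v i⟫ := h1
      _ = ∑ i : Fin n, ((‖v i‖^2 : ℝ) : ℂ) := by
          refine Finset.sum_congr rfl fun i _ => ?_
          rw [inner_self_eq_norm_sq_to_K]; norm_cast
      _ = ((∑ i : Fin n, ‖v i‖^2 : ℝ) : ℂ) := by push_cast; ring
    exact_mod_cast h2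
  have hXinorm : ∀ (X : L →L[ℂ] L) (u : L), ‖Xi X u‖ ≤ ‖X‖ * ‖u‖ := by
    intro X u
    have hexp : Xi X u = ∑ i : Fin n, W i (X (adjoint (W i) u)) := by
      simp [hXidef, ContinuousLinearMap.sum_apply, ContinuousLinearMap.comp_apply]
    have h1 : ‖Xi X u‖^2 = ∑ i : Fin n, ‖X (adjoint (W i) u)‖^2 := by
      rw [hexp]; exact hsum_orth _
    have h2 : ∑ i : Fin n, ‖X (adjoint (W i) u)‖^2 ≤ (‖X‖ * ‖u‖)^2 := by
      have hstep : ∀ i : Fin n, ‖X (adjoint (W i) u)‖^2 ≤ ‖X‖^2 * ‖adjoint (W i) u‖^2 := by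
        intro i
        rw [← mul_pow]
        have := X.le_opNorm (adjoint (W i) u)
        exact pow_le_pow_left₀ (norm_nonneg _) this 2
      calc ∑ i : Fin n, ‖X (adjoint (W i) u)‖^2
          ≤ ∑ i : Fin n, ‖X‖^2 * ‖adjoint (W i) u‖^2 := Finset.sum_le_sum fun i _ => hstep i
        _ = ‖X‖^2 * ∑ i : Fin n, ‖adjoint (W i) u‖^2 := by rw [Finset.mul_sum]
        _ = ‖X‖^2 * ‖u‖^2 := by rw [hWsq u]
        _ = (‖X‖ * ‖u‖)^2 := by ring
    have h3 : ‖Xi X u‖^2 ≤ (‖X‖ * ‖u‖)^2 := h1 ▸ h2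
    exact le_of_pow_le_pow_left₀ (by norm_num) (by positivity) h3
  have hgnorm : ∀ m : ℕ, ‖g m‖ ≤ ‖a‖ := by
    intro m
    induction m with
    | zero => simp [hgdef]
    | succ m ih =>
      have hit : g (m+1) = Xi (g m) := by
        simp only [hgdef]; rw [Function.iterate_succ_apply']
      rw [hit]
      have : ‖Xi (g m)‖ ≤ ‖g m‖ :=
        ContinuousLinearMap.opNorm_le_bound _ (norm_nonneg _) fun u => hXinorm (g m) u
      exact this.trans ih
  have hgpair : ∀ (m : ℕ) (u v : L),
      ⟪g (m+1) u, v⟫ = ∑ i : Fin n, ⟪g m (adjoint (W i) u), adjoint (W i) v⟫ := by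
    intro m u v
    have hit : g (m+1) = Xi (g m) := by
      simp only [hgdef]; rw [Function.iterate_succ_apply']
    rw [hit, hXipair]
  have hgconst : ∀ (m : ℕ), ∀ x ∈ Hc, ∀ y ∈ Hc, ⟪g m x, y⟫ = ⟪b x, y⟫ := by
    intro m
    induction m with
    | zero =>
      intro x hx y hy
      have hg0 : g 0 = a := by simp [hgdef]
      rw [hg0, hadef]
      simp only [ContinuousLinearMap.comp_apply]
      rw [hPmem x hx, hPsym (b x) y, hPmem y hy]
    | succ m ih =>
      intro x hx y hy
      rw [hgpair m x y]
      have hterm : ∀ i : Fin n, (⟪g m (adjoint (W i) x), adjoint (W i) y⟫ : ℂ)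
          = ⟪b (adjoint (W i) x), adjoint (W i) y⟫ := fun i =>
        ih _ (adjoint_mem_commPieceSub hx i) _ (adjoint_mem_commPieceSub hy i)
      rw [Finset.sum_congr rfl (fun i _ => hterm i)]
      exact hb x hx y hy
  have hpair_bound : ∀ (m : ℕ) (u v : L), ‖(⟪g m u, v⟫ : ℂ)‖ ≤ ‖a‖ * ‖u‖ * ‖v‖ := by
    intro m u v
    calc ‖(⟪g m u, v⟫ : ℂ)‖ ≤ ‖g m u‖ * ‖v‖ := norm_inner_le_norm _ _
      _ ≤ (‖a‖ * ‖u‖) * ‖v‖ := by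
        apply mul_le_mul_of_nonneg_right _ (norm_nonneg v)
        calc ‖g m u‖ ≤ ‖g m‖ * ‖u‖ := (g m).le_opNorm u
          _ ≤ ‖a‖ * ‖u‖ := mul_le_mul_of_nonneg_right (hgnorm m) (norm_nonneg u)
      _ = ‖a‖ * ‖u‖ * ‖v‖ := by ring
  set avg : ℕ → L → L → ℂ :=
    fun M u v => (M : ℂ)⁻¹ * ∑ m ∈ Finset.range M, ⟪g m u, v⟫ with havgdef
  have havgbound : ∀ (M : ℕ) (u v : L), ‖avg M u v‖ ≤ ‖a‖ * ‖u‖ * ‖v‖ := by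
    intro M u v
    rcases Nat.eq_zero_or_pos M with hM | hM
    · subst hM
      simp only [havgdef, Finset.range_zero, Finset.sum_empty, mul_zero, norm_zero]
      positivity
    · have h1 : ‖(∑ m ∈ Finset.range M, (⟪g m u, v⟫ : ℂ))‖
          ≤ (M : ℝ) * (‖a‖ * ‖u‖ * ‖v‖) := by
        calc ‖(∑ m ∈ Finset.range M, (⟪g m u, v⟫ : ℂ))‖
            ≤ ∑ m ∈ Finset.range M, ‖(⟪g m u, v⟫ : ℂ)‖ := norm_sum_le _ _
          _ ≤ ∑ _m ∈ Finset.range M, (‖a‖ * ‖u‖ * ‖v‖) :=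
            Finset.sum_le_sum fun m _ => hpair_bound m u v
          _ = (M : ℝ) * (‖a‖ * ‖u‖ * ‖v‖) := by
            rw [Finset.sum_const, Finset.card_range, nsmul_eq_mul]
      have hMne : (M : ℝ) ≠ 0 := Nat.cast_ne_zero.mpr hM.ne'
      calc ‖avg M u v‖ = ‖((M : ℂ))⁻¹‖ * ‖(∑ m ∈ Finset.range M, (⟪g m u, v⟫ : ℂ))‖ := by
            rw [havgdef]; exact norm_mul _ _
        _ = (M : ℝ)⁻¹ * ‖(∑ m ∈ Finset.range M, (⟪g m u, v⟫ : ℂ))‖ := by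
            congr 1
            rw [norm_inv]
            congr 1
            exact Complex.norm_natCast M
        _ ≤ (M : ℝ)⁻¹ * ((M : ℝ) * (‖a‖ * ‖u‖ * ‖v‖)) := by
            apply mul_le_mul_of_nonneg_left h1
            positivity
        _ = ‖a‖ * ‖u‖ * ‖v‖ := by field_simp
  have havg_addv : ∀ (M : ℕ) (u v v' : L), avg M u (v + v') = avg M u v + avg M u v' := by
    intro M u v v'
    simp only [havgdef, inner_add_right, Finset.sum_add_distrib, mul_add]
  have havg_smulv : ∀ (M : ℕ) (u v : L) (c : ℂ), avg M u (c • v) = c * avg M u v := by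
    intro M u v c
    simp only [havgdef, inner_smul_right, ← Finset.mul_sum]
    ring
  have havg_addu : ∀ (M : ℕ) (u u' v : L), avg M (u + u') v = avg M u v + avg M u' v := by
    intro M u u' v
    simp only [havgdef, map_add, inner_add_left, Finset.sum_add_distrib, mul_add]
  have havg_smulu : ∀ (M : ℕ) (u v : L) (c : ℂ),
      avg M (c • u) v = (starRingEnd ℂ) c * avg M u v := by
    intro M u v c
    simp only [havgdef, map_smul, inner_smul_left, ← Finset.mul_sum]
    ring
  have hshift : ∀ (M : ℕ) (u v : L),
      ∑ i : Fin n, avg M (adjoint (W i) u) (adjoint (W i) v)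
        = avg M u v + (M : ℂ)⁻¹ * (⟪g M u, v⟫ - ⟪g 0 u, v⟫) := by
    intro M u v
    have h1 : ∑ i : Fin n, avg M (adjoint (W i) u) (adjoint (W i) v)
        = (M : ℂ)⁻¹ * ∑ m ∈ Finset.range M, ⟪g (m+1) u, v⟫ := by
      simp only [havgdef, ← Finset.mul_sum]
      congr 1
      rw [Finset.sum_comm]
      exact Finset.sum_congr rfl fun m _ => (hgpair m u v).symm
    rw [h1]
    have h2 : ∑ m ∈ Finset.range M, (⟪g (m+1) u, v⟫ : ℂ)
        = (∑ m ∈ Finset.range M, (⟪g m u, v⟫ : ℂ)) + ⟪g M u, v⟫ - ⟪g 0 u, v⟫ := by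
      have hs' := Finset.sum_range_succ' (fun m => (⟪g m u, v⟫ : ℂ)) M
      have hs := Finset.sum_range_succ (fun m => (⟪g m u, v⟫ : ℂ)) M
      rw [hs] at hs'
      linear_combination hs'.symm
    rw [h2]
    ring
  let U : Ultrafilter ℕ := Ultrafilter.of Filter.atTop
  have hUle : (U : Filter ℕ) ≤ Filter.atTop := Ultrafilter.of_le _
  have hex : ∀ u v : L, ∃ c : ℂ, Filter.Tendsto (fun M => avg M u v) U (nhds c) := by
    intro u v
    have hcpt : IsCompact (Metric.closedBall (0:ℂ) (‖a‖ * ‖u‖ * ‖v‖)) :=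
      isCompact_closedBall _ _
    have hmem : Metric.closedBall (0:ℂ) (‖a‖ * ‖u‖ * ‖v‖) ∈ U.map (fun M => avg M u v) := by
      refine Ultrafilter.mem_map.mpr (Filter.univ_mem' ?_)
      intro M
      simp only [Set.mem_preimage, Metric.mem_closedBall, dist_zero_right]
      exact havgbound M u v
    obtain ⟨c, _hc, hconv⟩ := hcpt.ultrafilter_le_nhds (U.map (fun M => avg M u v))
      (Filter.le_principal_iff.mpr hmem)
    rw [Ultrafilter.coe_map] at hconv
    exact ⟨c, hconv⟩
  let φ : L → L → ℂ := fun u v => (hex u v).choose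
  have hφ : ∀ u v : L, Filter.Tendsto (fun M => avg M u v) U (nhds (φ u v)) :=
    fun u v => (hex u v).choose_spec
  haveI hneU : (U : Filter ℕ).NeBot := Ultrafilter.neBot U
  have hφ_addv : ∀ u v v' : L, φ u (v + v') = φ u v + φ u v' := by
    intro u v v'
    refine tendsto_nhds_unique (hφ u (v + v')) ?_
    exact ((hφ u v).add (hφ u v')).congr fun M => (havg_addv M u v v').symm
  have hφ_smulv : ∀ (u v : L) (c : ℂ), φ u (c • v) = c * φ u v := by
    intro u v c
    refine tendsto_nhds_unique (hφ u (c • v)) ?_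
    exact ((hφ u v).const_mul c).congr fun M => (havg_smulv M u v c).symm
  have hφ_addu : ∀ u u' v : L, φ (u + u') v = φ u v + φ u' v := by
    intro u u' v
    refine tendsto_nhds_unique (hφ (u + u') v) ?_
    exact ((hφ u v).add (hφ u' v)).congr fun M => (havg_addu M u u' v).symm
  have hφ_smulu : ∀ (u v : L) (c : ℂ), φ (c • u) v = (starRingEnd ℂ) c * φ u v := by
    intro u v c
    refine tendsto_nhds_unique (hφ (c • u) v) ?_
    exact ((hφ u v).const_mul ((starRingEnd ℂ) c)).congr fun M => (havg_smulu M u v c).symm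
  have hφbound : ∀ u v : L, ‖φ u v‖ ≤ ‖a‖ * ‖u‖ * ‖v‖ := by
    intro u v
    exact le_of_tendsto (hφ u v).norm (Filter.Eventually.of_forall fun M => havgbound M u v)
  have hφfix : ∀ u v : L, ∑ i : Fin n, φ (adjoint (W i) u) (adjoint (W i) v) = φ u v := by
    intro u v
    have hlhs : Filter.Tendsto (fun M => ∑ i : Fin n, avg M (adjoint (W i) u) (adjoint (W i) v))
        U (nhds (∑ i : Fin n, φ (adjoint (W i) u) (adjoint (W i) v))) := by
      apply tendsto_finset_sum
      intro i _
      exact hφ _ _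
    have herr : Filter.Tendsto
        (fun M : ℕ => (M : ℂ)⁻¹ * (⟪g M u, v⟫ - ⟪g 0 u, v⟫)) Filter.atTop (nhds 0) := by
      have hbnd : ∀ M : ℕ, ‖(M : ℂ)⁻¹ * ((⟪g M u, v⟫ : ℂ) - ⟪g 0 u, v⟫)‖
          ≤ (M : ℝ)⁻¹ * (2 * (‖a‖ * ‖u‖ * ‖v‖)) := by
        intro M
        rw [norm_mul]
        apply mul_le_mul
        · rw [norm_inv, Complex.norm_natCast]
        · calc ‖(⟪g M u, v⟫ : ℂ) - ⟪g 0 u, v⟫‖ ≤ ‖(⟪g M u, v⟫ : ℂ)‖ + ‖(⟪g 0 u, v⟫ : ℂ)‖ :=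
              norm_sub_le _ _
            _ ≤ (‖a‖ * ‖u‖ * ‖v‖) + (‖a‖ * ‖u‖ * ‖v‖) :=
              add_le_add (hpair_bound M u v) (hpair_bound 0 u v)
            _ = 2 * (‖a‖ * ‖u‖ * ‖v‖) := by ring
        · exact norm_nonneg _
        · positivity
      have htd : Filter.Tendsto (fun M : ℕ => (M : ℝ)⁻¹ * (2 * (‖a‖ * ‖u‖ * ‖v‖)))
          Filter.atTop (nhds 0) := by
        have h0 : Filter.Tendsto (fun M : ℕ => (M : ℝ)⁻¹) Filter.atTop (nhds 0) :=
          tendsto_inv_atTop_nhds_zero_nat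
        have := h0.mul_const (2 * (‖a‖ * ‖u‖ * ‖v‖))
        simpa using this
      exact squeeze_zero_norm hbnd htd
    have hrhs : Filter.Tendsto (fun M => avg M u v + (M : ℂ)⁻¹ * (⟪g M u, v⟫ - ⟪g 0 u, v⟫))
        U (nhds (φ u v + 0)) :=
      (hφ u v).add (herr.mono_left hUle)
    rw [add_zero] at hrhs
    exact tendsto_nhds_unique (hlhs.congr fun M => hshift M u v) hrhs
  have hφconst : ∀ x ∈ Hc, ∀ y ∈ Hc, φ x y = ⟪b x, y⟫ := by
    intro x hx y hy
    have heventually : (fun M => avg M x y) =ᶠ[(U : Filter ℕ)] (fun _ => (⟪b x, y⟫ : ℂ)) := by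
      apply hUle
      filter_upwards [Filter.eventually_ge_atTop 1] with M hM
      have hMne : (M : ℂ) ≠ 0 := Nat.cast_ne_zero.mpr (by omega)
      have hsum : ∑ m ∈ Finset.range M, (⟪g m x, y⟫ : ℂ) = (M : ℂ) * ⟪b x, y⟫ := by
        rw [Finset.sum_congr rfl (fun m _ => hgconst m x hx y hy)]
        rw [Finset.sum_const, Finset.card_range, nsmul_eq_mul]
      show (M : ℂ)⁻¹ * ∑ m ∈ Finset.range M, (⟪g m x, y⟫ : ℂ) = ⟪b x, y⟫
      rw [hsum, ← mul_assoc, inv_mul_cancel₀ hMne, one_mul]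
    have h1 : Filter.Tendsto (fun M => avg M x y) U (nhds (⟪b x, y⟫ : ℂ)) :=
      Filter.Tendsto.congr' heventually.symm tendsto_const_nhds
    exact tendsto_nhds_unique (hφ x y) h1
  -- zero laws for φ
  have hφzero_u : ∀ v : L, φ 0 v = 0 := by
    intro v
    have h := hφ_smulu 0 v 0
    simpa using h
  have hφzero_v : ∀ u : L, φ u 0 = 0 := by
    intro u
    have h := hφ_smulv u 0 0
    simpa using h
  -- construct the operator A with ⟪A u, v⟫ = φ u v
  have hkey : ∀ u : L, ∃ z : L, ∀ v, ⟪z, v⟫ = φ u v := by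
    intro u
    let Flin : L →ₗ[ℂ] ℂ :=
      { toFun := fun v => φ u v
        map_add' := fun v v' => hφ_addv u v v'
        map_smul' := fun c v => by simpa using hφ_smulv u v c }
    have hFbound : ∀ v, ‖Flin v‖ ≤ (‖a‖ * ‖u‖) * ‖v‖ := by
      intro v
      show ‖φ u v‖ ≤ (‖a‖ * ‖u‖) * ‖v‖
      simpa [mul_assoc] using hφbound u v
    let F : L →L[ℂ] ℂ := Flin.mkContinuous (‖a‖ * ‖u‖) hFbound
    refine ⟨(InnerProductSpace.toDual ℂ L).symm F, fun v => ?_⟩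
    rw [InnerProductSpace.toDual_symm_apply]
    rfl
  let Af : L → L := fun u => (hkey u).choose
  have hAf : ∀ u v : L, ⟪Af u, v⟫ = φ u v := fun u v => (hkey u).choose_spec v
  have hAadd : ∀ u u' : L, Af (u + u') = Af u + Af u' := by
    intro u u'
    apply ext_inner_right ℂ
    intro v
    rw [hAf, inner_add_left, hAf, hAf, hφ_addu]
  have hAsmul : ∀ (c : ℂ) (u : L), Af (c • u) = c • Af u := by
    intro c u
    apply ext_inner_right ℂ
    intro v
    rw [hAf, inner_smul_left, hAf, hφ_smulu]
  have hAbound : ∀ u : L, ‖Af u‖ ≤ ‖a‖ * ‖u‖ := by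
    intro u
    rcases eq_or_ne (Af u) 0 with h0 | h0
    · rw [h0, norm_zero]; positivity
    · have h1 : (‖Af u‖ : ℝ)^2 = ‖(⟪Af u, Af u⟫ : ℂ)‖ := by
        rw [inner_self_eq_norm_sq_to_K, norm_pow, RCLike.norm_ofReal,
          abs_of_nonneg (norm_nonneg _)]
      have h2 : ‖(⟪Af u, Af u⟫ : ℂ)‖ = ‖φ u (Af u)‖ := by rw [hAf]
      have h3 : ‖φ u (Af u)‖ ≤ ‖a‖ * ‖u‖ * ‖Af u‖ := hφbound u (Af u)
      have h4 : ‖Af u‖ * ‖Af u‖ ≤ (‖a‖ * ‖u‖) * ‖Af u‖ := by nlinarith [h1, h2, h3]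
      have hpos : 0 < ‖Af u‖ := norm_pos_iff.mpr h0
      exact le_of_mul_le_mul_right h4 hpos
  let Alin : L →ₗ[ℂ] L :=
    { toFun := Af
      map_add' := hAadd
      map_smul' := fun c u => by simpa using hAsmul c u }
  let A : L →L[ℂ] L := Alin.mkContinuous ‖a‖ hAbound
  have hA : ∀ u v : L, ⟪A u, v⟫ = φ u v := fun u v => hAf u v
  -- A commutes with the W i and their adjoints
  have hAcomm1 : ∀ j, Commute A (W j) := by
    intro j
    have hptwise : ∀ u, A (W j u) = W j (A u) := by
      intro u
      apply ext_inner_right ℂ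
      intro v
      calc ⟪A (W j u), v⟫ = φ (W j u) v := hA _ _
        _ = ∑ i : Fin n, φ (adjoint (W i) (W j u)) (adjoint (W i) v) := (hφfix _ _).symm
        _ = ∑ i : Fin n, (if i = j then φ u (adjoint (W i) v) else 0) := by
            refine Finset.sum_congr rfl fun i _ => ?_
            rw [hisompt i j u]
            split_ifs with h
            · rfl
            · exact hφzero_u _
        _ = φ u (adjoint (W j) v) := by
            rw [Finset.sum_ite_eq' Finset.univ j (fun i => φ u (adjoint (W i) v))]
            simp
        _ = ⟪A u, adjoint (W j) v⟫ := (hA _ _).symm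
        _ = ⟪W j (A u), v⟫ := adjoint_inner_right (W j) (A u) v
    have hcc : A * W j = W j * A := by
      ext u
      simp only [ContinuousLinearMap.mul_apply]
      exact hptwise u
    exact hcc
  have hAcomm2 : ∀ j, Commute A (adjoint (W j)) := by
    intro j
    have hptwise : ∀ u, A (adjoint (W j) u) = adjoint (W j) (A u) := by
      intro u
      apply ext_inner_right ℂ
      intro v
      have hsum := hφfix u (W j v)
      have hterm : ∀ i : Fin n, φ (adjoint (W i) u) (adjoint (W i) (W j v))
          = if i = j then φ (adjoint (W j) u) v else 0 := by
        intro i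
        rw [hisompt i j v]
        split_ifs with h
        · rw [h]
        · exact hφzero_v _
      rw [Finset.sum_congr rfl (fun i _ => hterm i),
        Finset.sum_ite_eq' Finset.univ j (fun i => φ (adjoint (W j) u) v)] at hsum
      simp only [Finset.mem_univ, if_true] at hsum
      calc ⟪A (adjoint (W j) u), v⟫ = φ (adjoint (W j) u) v := hA _ _
        _ = φ u (W j v) := hsum
        _ = ⟪A u, W j v⟫ := (hA _ _).symm
        _ = ⟪adjoint (W j) (A u), v⟫ := (adjoint_inner_left (W j) v (A u)).symm
    have hcc : A * adjoint (W j) = adjoint (W j) * A := by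
      ext u
      simp only [ContinuousLinearMap.mul_apply]
      exact hptwise u
    exact hcc
  obtain ⟨c, hc⟩ := scalar_of_commutes hirr A hAcomm1 hAcomm2
  refine ⟨(starRingEnd ℂ) c, ?_⟩
  intro x hx y hy
  have h1 : (⟪b x, y⟫ : ℂ) = φ x y := (hφconst x hx y hy).symm
  have h2 : φ x y = ⟪A x, y⟫ := (hA x y).symm
  have h3 : A x = c • x := by rw [hc]; simp
  rw [h1, h2, h3, inner_smul_left]



end Aux

/-- an irreducible Cuntz tuple has maximal commuting piece space of
dimension at most one; if it is nonzero it is spanned by a unit vector `x` which is a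
joint eigenvector: `W_i^* x = conj(w_i) x` with `Σ |w_i|² = 1`. -/
theorem stmt13 {n : ℕ} (hn : 2 ≤ n) {L : Type*} [NormedAddCommGroup L]
    [InnerProductSpace ℂ L] [CompleteSpace L]
    (W : Fin n → L →L[ℂ] L)
    (hisom : ∀ i j : Fin n, adjoint (W i) ∘L W j = if i = j then 1 else 0)
    (hcuntz : ∑ i : Fin n, W i ∘L adjoint (W i) = 1)
    (hirr : ∀ N : Submodule ℂ L, IsClosed (N : Set L) →
      (∀ i : Fin n, ∀ x ∈ N, W i x ∈ N ∧ adjoint (W i) x ∈ N) → N = ⊥ ∨ N = ⊤) :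
    Module.rank ℂ ↥(commPieceSub W) ≤ 1 ∧
    (commPieceSub W ≠ ⊥ → ∃ (x : L) (w : Fin n → ℂ), ‖x‖ = 1 ∧
      Submodule.span ℂ {x} = commPieceSub W ∧ (∑ i : Fin n, ‖w i‖ ^ 2) = 1 ∧
      ∀ i : Fin n, adjoint (W i) x = (starRingEnd ℂ) (w i) • x) := by
  classical
  by_cases hbot : commPieceSub W = ⊥
  · constructor
    · rw [hbot]
      have : Module.rank ℂ ↥(⊥ : Submodule ℂ L) = 0 := rank_bot ℂ L
      rw [this]
      exact zero_le_one
    · intro h; exact absurd hbot h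
  · obtain ⟨x₁, hx₁mem, hx₁ne⟩ := (Submodule.ne_bot_iff _).mp hbot
    have hx₁n : ‖x₁‖ ≠ 0 := norm_ne_zero_iff.mpr hx₁ne
    set x₀ : L := ((‖x₁‖ : ℂ))⁻¹ • x₁ with hx₀def
    have hx₀mem : x₀ ∈ commPieceSub W := Submodule.smul_mem _ _ hx₁mem
    have hx₀norm : ‖x₀‖ = 1 := by
      rw [hx₀def, norm_smul, norm_inv]
      have h5 : ‖((‖x₁‖ : ℝ) : ℂ)‖ = ‖x₁‖ := by
        rw [Complex.norm_real, Real.norm_eq_abs, abs_of_nonneg (norm_nonneg _)]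
      rw [h5, inv_mul_cancel₀ hx₁n]
    haveI : Nontrivial L := by
      refine nontrivial_of_ne x₀ 0 ?_
      intro h
      rw [h, norm_zero] at hx₀norm
      norm_num at hx₀norm
    have hSS : ∀ (k : Fin n), ∀ x ∈ commPieceSub W, ∀ y ∈ commPieceSub W,
        ∑ i : Fin n, (inner ℂ (adjoint (W k) (adjoint (W i) x)) (adjoint (W i) y) : ℂ)
          = inner ℂ (adjoint (W k) x) y := by
      intro k x hx y hy
      have hterm : ∀ i : Fin n, (inner ℂ (adjoint (W k) (adjoint (W i) x)) (adjoint (W i) y) : ℂ)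
          = inner ℂ (W i (adjoint (W i) (adjoint (W k) x))) y := by
        intro i
        rw [adjoint_comm_commPieceSub hx k i]
        exact adjoint_inner_right (W i) _ y
      rw [Finset.sum_congr rfl (fun i _ => hterm i), ← sum_inner, cuntz_pt hcuntz]
    have happ1 : ∀ k : Fin n, ∃ e : ℂ, ∀ x ∈ commPieceSub W,
        adjoint (W k) x = (starRingEnd ℂ) e • x := by
      intro k
      obtain ⟨c, hc⟩ := core_scalar hisom hcuntz hirr (adjoint (W k)) (hSS k)
      refine ⟨c, fun x hx => ?_⟩
      have hz : adjoint (W k) x - (starRingEnd ℂ) c • x ∈ commPieceSub W :=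
        Submodule.sub_mem _ (adjoint_mem_commPieceSub hx k) (Submodule.smul_mem _ _ hx)
      have hzero : (inner ℂ (adjoint (W k) x - (starRingEnd ℂ) c • x)
          (adjoint (W k) x - (starRingEnd ℂ) c • x) : ℂ) = 0 := by
        rw [inner_sub_left, inner_smul_left, hc x hx _ hz, Complex.conj_conj]
        have h7 : (inner ℂ x (adjoint (W k) x - (starRingEnd ℂ) c • x) : ℂ)
            = (starRingEnd ℂ) ((inner ℂ (adjoint (W k) x - (starRingEnd ℂ) c • x) x : ℂ)) := by
          rw [inner_conj_symm]
        rw [h7, inner_sub_left, inner_smul_left, hc x hx x hx, Complex.conj_conj]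
        ring
      rw [inner_self_eq_zero] at hzero
      exact sub_eq_zero.mp hzero
    choose w hw using happ1
    have hnorms : ∀ i : Fin n, ‖adjoint (W i) x₀‖ = ‖w i‖ := by
      intro i
      rw [hw i x₀ hx₀mem, norm_smul, RCLike.norm_conj, hx₀norm, mul_one]
    have hsumw : (∑ i : Fin n, ‖w i‖^2) = 1 := by
      have h8 := sum_adjoint_sq hcuntz x₀
      rw [hx₀norm] at h8
      calc ∑ i : Fin n, ‖w i‖^2 = ∑ i : Fin n, ‖adjoint (W i) x₀‖^2 :=
            Finset.sum_congr rfl fun i _ => by rw [hnorms i]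
        _ = 1 := by rw [h8]; norm_num
    have hsumwC : (∑ i : Fin n, (w i) * (starRingEnd ℂ) (w i)) = 1 := by
      have hterm : ∀ i : Fin n, (w i) * (starRingEnd ℂ) (w i) = ((‖w i‖^2 : ℝ) : ℂ) := by
        intro i
        rw [Complex.mul_conj]
        norm_cast
        rw [Complex.normSq_eq_norm_sq]
      rw [Finset.sum_congr rfl (fun i _ => hterm i), ← Complex.ofReal_sum, hsumw]
      norm_num
    set b2 : L →L[ℂ] L := (innerSL ℂ x₀).smulRight x₀ with hb2def
    have hb2apply : ∀ v : L, b2 v = (inner ℂ x₀ v : ℂ) • x₀ := by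
      intro v
      simp [hb2def]
    have hb2 : ∀ x ∈ commPieceSub W, ∀ y ∈ commPieceSub W,
        ∑ i : Fin n, (inner ℂ (b2 (adjoint (W i) x)) (adjoint (W i) y) : ℂ) = inner ℂ (b2 x) y := by
      intro x hx y hy
      have hterm : ∀ i : Fin n, (inner ℂ (b2 (adjoint (W i) x)) (adjoint (W i) y) : ℂ)
          = (w i) * (starRingEnd ℂ) (w i) * inner ℂ (b2 x) y := by
        intro i
        rw [hw i x hx, hw i y hy, map_smul, inner_smul_left, inner_smul_right,
          Complex.conj_conj]
        ring
      rw [Finset.sum_congr rfl (fun i _ => hterm i), ← Finset.sum_mul, hsumwC, one_mul]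
    obtain ⟨c₂, hc₂⟩ := core_scalar hisom hcuntz hirr b2 hb2
    have hx₀inner : (inner ℂ x₀ x₀ : ℂ) = 1 := by
      rw [inner_self_eq_norm_sq_to_K, hx₀norm]
      norm_num
    have hc₂1 : c₂ = 1 := by
      have h9 := hc₂ x₀ hx₀mem x₀ hx₀mem
      rw [hb2apply, inner_smul_left, hx₀inner] at h9
      simpa using h9.symm
    have hkey : ∀ z ∈ commPieceSub W, ∀ y ∈ commPieceSub W,
        (inner ℂ z y : ℂ) = (inner ℂ z x₀ : ℂ) * inner ℂ x₀ y := by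
      intro z hz y hy
      have h10 := hc₂ z hz y hy
      rw [hc₂1, one_mul] at h10
      rw [← h10, hb2apply, inner_smul_left, inner_conj_symm]
    have hspan_le : commPieceSub W ≤ Submodule.span ℂ {x₀} := by
      intro y hy
      have hzmem : y - (inner ℂ x₀ y : ℂ) • x₀ ∈ commPieceSub W :=
        Submodule.sub_mem _ hy (Submodule.smul_mem _ _ hx₀mem)
      have h6 : (inner ℂ (y - (inner ℂ x₀ y : ℂ) • x₀) (y - (inner ℂ x₀ y : ℂ) • x₀) : ℂ) = 0 := by
        rw [inner_sub_right, inner_smul_right, hkey _ hzmem y hy]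
        ring
      rw [inner_self_eq_zero, sub_eq_zero] at h6
      rw [Submodule.mem_span_singleton]
      exact ⟨(inner ℂ x₀ y : ℂ), h6.symm⟩
    have hspan : Submodule.span ℂ {x₀} = commPieceSub W := by
      apply le_antisymm
      · rw [Submodule.span_le, Set.singleton_subset_iff]
        exact hx₀mem
      · exact hspan_le
    constructor
    · rw [← hspan]
      have h11 := rank_span_le (R := ℂ) (M := L) {x₀}
      rw [Cardinal.mk_singleton] at h11
      exact h11
    · intro _
      exact ⟨x₀, w, hx₀norm, hspan, hsumw, fun i => hw i x₀ hx₀mem⟩
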